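/- Let R be a Noetherian commutative ring, M a finitely generated R-module, and y ∈ R a non-zerodivisor on R such that multiplication by y on Ext^1_R(M,R) is injective. Set A = R/(y). Then the natural A-linear map Hom_R(M,R) ⊗_R A → Hom_A(M ⊗_R A, A), induced by composing R-linear maps M → R with the projection R → A, is an isomorphism. In particular, every R-linear map M → A lifts to an R-linear map M → R. -/

import Mathlib

open scoped TensorProduct

open CategoryTheory

noncomputable section

universe u


lemma aux_div {R : Type u} [CommRing R] {N : Type*} [AddCommGroup N] [Module R N] {y : R}
    (hy : y ∈ nonZeroDivisors R) (h : N →ₗ[R] R)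
    (hmem : ∀ n, h n ∈ Ideal.span {y}) :
    ∃ H : N →ₗ[R] R, h = y • H := by
  have hc : ∀ n : N, ∃ r : R, h n = y * r := by
    intro n
    obtain ⟨r, hr⟩ := Ideal.mem_span_singleton'.mp (hmem n)
    exact ⟨r, by rw [← hr, mul_comm]⟩
  choose c hc using hc
  have cancel : ∀ a b : R, y * a = y * b → a = b := fun a b hab =>
    sub_eq_zero.mp ((mem_nonZeroDivisors_iff.mp hy).2 (a - b) (by rw [sub_mul, mul_comm a y, mul_comm b y, hab, sub_self]))
  refine ⟨{ toFun := c, map_add' := ?_, map_smul' := ?_ }, ?_⟩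
  · intro a b
    apply cancel
    rw [← hc, map_add, hc, hc, mul_add]
  · intro r a
    apply cancel
    simp only [RingHom.id_apply]
    rw [← hc, map_smul, smul_eq_mul, hc, smul_eq_mul]
    ring
  · ext n
    simp only [LinearMap.smul_apply, LinearMap.coe_mk, AddHom.coe_mk, smul_eq_mul]
    exact hc n

lemma lift_of_ext (R : Type u) [CommRing R]
    (M : Type u) [AddCommGroup M] [Module R M]
    (y : R) (hy : y ∈ nonZeroDivisors R)
    (hext : Function.Injective
      (fun z : ((Ext R (ModuleCat.{u} R) 1).obj
          (Opposite.op (ModuleCat.of R M))).obj (ModuleCat.of R R) => y • z))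
    (g : M →ₗ[R] (R ⧸ Ideal.span {y})) :
    ∃ f : M →ₗ[R] R,
      (Algebra.linearMap R (R ⧸ Ideal.span {y})).comp f = g := by
  classical
  have cancel : ∀ a : R, y * a = 0 → a = 0 := fun a ha =>
    (mem_nonZeroDivisors_iff.mp hy).2 a (by rw [mul_comm]; exact ha)
  set X : ModuleCat.{u} R := ModuleCat.of R M with hXdef
  set Y : ModuleCat.{u} R := ModuleCat.of R R with hYdef
  let A : ModuleCat.{u} R := ModuleCat.of R (R ⧸ Ideal.span {y})
  let coeY : (Y : Type u) →ₗ[R] R := LinearMap.id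
  let q : Y ⟶ A := ModuleCat.ofHom (Algebra.linearMap R (R ⧸ Ideal.span {y}))
  haveI : Epi q := (ModuleCat.epi_iff_surjective q).mpr (by
    intro a
    obtain ⟨r, hr⟩ := Ideal.Quotient.mk_surjective a
    exact ⟨r, hr⟩)
  let P : ProjectiveResolution X := ProjectiveResolution.of X
  let g' : X ⟶ A := ModuleCat.ofHom g
  let π0 : P.complex.X 0 ⟶ X := P.π.f 0
  let d1 : P.complex.X 1 ⟶ P.complex.X 0 := P.complex.d 1 0
  let d2 : P.complex.X 2 ⟶ P.complex.X 1 := P.complex.d 2 1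
  let G0 : P.complex.X 0 ⟶ Y := Projective.factorThru (π0 ≫ g') q
  have hG0 : G0 ≫ q = π0 ≫ g' := Projective.factorThru_comp _ _
  have hd1π0 : d1 ≫ π0 = 0 := P.complex_d_comp_π_f_zero
  -- d1 ≫ G0 lands in the ideal (y)
  have hmem : ∀ n : P.complex.X 1, ((d1 ≫ G0) n : R) ∈ Ideal.span {y} := by
    intro n
    have hcomp : (d1 ≫ G0) ≫ q = 0 := by
      rw [Category.assoc, hG0, ← Category.assoc, hd1π0, Limits.zero_comp]
    have h0 : q ((d1 ≫ G0) n) = 0 := congrArg (fun φ : P.complex.X 1 ⟶ A => φ n) hcomp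
    exact (Ideal.Quotient.eq_zero_iff_mem (I := Ideal.span {y})).mp h0
  obtain ⟨H', hH'⟩ := aux_div hy (d1 ≫ G0).hom hmem
  let H : P.complex.X 1 ⟶ Y := ModuleCat.ofHom H'
  have hHapp : ∀ n : P.complex.X 1, coeY (G0 (d1 n)) = y * H' n :=
    fun n => congrArg (fun φ : (P.complex.X 1 : Type u) →ₗ[R] R => φ n) hH'
  -- the cochain complex Hom(P, Y)
  let K := P.complex.linearYonedaObj R Y
  let S : ShortComplex (ModuleCat.{u} R) := K.sc' 0 1 2
  -- H is a cocycle
  have hcoc : S.g H = 0 := by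
    have h : ∀ n : P.complex.X 2, coeY ((d2 ≫ H) n) = 0 := by
      intro n
      apply cancel
      have h2 : (d1 (d2 n) : (P.complex.X 0 : Type u)) = 0 :=
        congrArg (fun φ : P.complex.X 2 ⟶ P.complex.X 0 => φ n) (P.complex.d_comp_d 2 1 0)
      have h3 : coeY ((d2 ≫ H) n) = H' (d2 n) := rfl
      rw [h3, ← hHapp (d2 n), h2, map_zero, map_zero]
    exact ModuleCat.hom_ext (LinearMap.ext h)
  let Hc : S.moduleCatLeftHomologyData.K := ⟨H, hcoc⟩
  -- transport the injectivity hypothesis across the isomorphism with concrete homology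
  let e : ((Ext R (ModuleCat.{u} R) 1).obj (Opposite.op X)).obj Y ≅ S.moduleCatLeftHomologyData.H :=
    P.isoExt 1 Y ≪≫ K.homologyIsoSc' 0 1 2 (by simp) (by simp) ≪≫ S.moduleCatHomologyIso
  have hinj : ∀ w : S.moduleCatLeftHomologyData.H, y • w = 0 → w = 0 := by
    intro w hw
    have h2 : y • (e.inv w) = 0 := by
      rw [← map_smul (ConcreteCategory.hom e.inv) y w, hw, map_zero]
    have h3 : e.inv w = (0 : ((Ext R (ModuleCat.{u} R) 1).obj (Opposite.op X)).obj Y) :=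
      hext (a₁ := e.inv w) (a₂ := 0) (by show y • e.inv w = y • 0; rw [smul_zero]; exact h2)
    have h4 : e.hom (e.inv w) = w := by
      show (e.inv ≫ e.hom) w = w
      rw [e.inv_hom_id]
      rfl
    rw [← h4, h3, map_zero]
  -- the class of H is killed by y, hence zero
  have hz : S.moduleCatLeftHomologyData.π Hc = 0 := by
    apply hinj
    rw [← map_smul]
    have hyH : y • Hc = S.moduleCatToCycles G0 := by
      apply Subtype.ext
      show y • H = S.f G0
      exact ModuleCat.hom_ext hH'.symm
    rw [hyH]
    exact (Submodule.Quotient.mk_eq_zero _).mpr (LinearMap.mem_range.mpr ⟨G0, rfl⟩)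
  obtain ⟨K0, hK0⟩ := (Submodule.Quotient.mk_eq_zero _).mp hz
  let K0' : P.complex.X 0 ⟶ Y := K0
  have hK0' : ∀ n : P.complex.X 1, coeY (K0' (d1 n)) = H' n :=
    fun n => congrArg (fun ψ : P.complex.X 1 ⟶ Y => ψ n) (congrArg Subtype.val hK0)
  -- the corrected lift of g
  let f0 : P.complex.X 0 ⟶ Y := G0 - y • K0'
  have hd1f0 : d1 ≫ f0 = 0 := by
    have h : ∀ n : P.complex.X 1, coeY ((d1 ≫ f0) n) = 0 := by
      intro n
      have h1 : coeY ((d1 ≫ f0) n) = coeY (G0 (d1 n)) - y * coeY (K0' (d1 n)) := rfl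
      rw [h1, hK0' n, hHapp n, sub_self]
    exact ModuleCat.hom_ext (LinearMap.ext h)
  obtain ⟨f, hf⟩ := Limits.CokernelCofork.IsColimit.desc' P.isColimitCokernelCofork f0 hd1f0
  have hf' : π0 ≫ (f : X ⟶ Y) = f0 := hf
  have hsurj : Function.Surjective π0 := (ModuleCat.epi_iff_surjective π0).mp (inferInstance : Epi (P.π.f 0))
  refine ⟨f.hom, ?_⟩
  apply LinearMap.ext
  intro m
  obtain ⟨x, rfl⟩ := hsurj m
  have h5 : Ideal.Quotient.mk (Ideal.span {y}) (y * coeY (K0' x)) = 0 := by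
    rw [Ideal.Quotient.eq_zero_iff_mem]
    exact Ideal.mul_mem_right _ _ (Ideal.mem_span_singleton_self y)
  have h6 : Ideal.Quotient.mk (Ideal.span {y}) (coeY (G0 x)) = g (π0 x) :=
    congrArg (fun φ : P.complex.X 0 ⟶ A => φ x) hG0
  show Ideal.Quotient.mk (Ideal.span {y}) (coeY ((π0 ≫ (f : X ⟶ Y)) x)) = g (π0 x)
  rw [hf']
  show Ideal.Quotient.mk (Ideal.span {y}) (coeY (G0 x) - y * coeY (K0' x)) = g (π0 x)
  rw [map_sub, h5, h6, sub_zero]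

section NatMap

variable (R : Type u) [CommRing R] (M : Type u) [AddCommGroup M] [Module R M] (y : R)

/-- The natural map `Hom_R(M,R) ⊗_R A → Hom_A(M ⊗_R A, A)`, for `A = R/(y)`,
sending `f ⊗ ā` to the `A`-linear map determined by `ā ⊗ m ↦ ā·(f m mod y)`. -/
def homTensorQuotMap :
    ((M →ₗ[R] R) ⊗[R] (R ⧸ Ideal.span {y})) →ₗ[R]
      (((R ⧸ Ideal.span {y}) ⊗[R] M) →ₗ[R ⧸ Ideal.span {y}] (R ⧸ Ideal.span {y})) :=
  TensorProduct.lift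
    (LinearMap.mk₂ R
      (fun f a => a • LinearMap.liftBaseChangeEquiv (R ⧸ Ideal.span {y})
        ((Algebra.linearMap R (R ⧸ Ideal.span {y})).comp f))
      (fun f f' a => by
        simp only [LinearMap.comp_add, map_add, smul_add])
      (fun c f a => by
        simp only [LinearMap.comp_smul]
        rw [← algebraMap_smul (R ⧸ Ideal.span {y}) c
            ((Algebra.linearMap R (R ⧸ Ideal.span {y})).comp f),
          map_smul, smul_comm, algebraMap_smul])
      (fun f a a' => by simp only [add_smul])
      (fun c f a => by simp only [smul_assoc]))

end NatMap

/-- Let `R` be Noetherian, `M` finitely generated, `y` a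
non-zerodivisor on `R` such that multiplication by `y` on `Ext¹_R(M,R)` is
injective, and `A = R/(y)`.  Then the natural map
`Hom_R(M,R) ⊗_R A → Hom_A(M ⊗_R A, A)` is an isomorphism; in particular every
`R`-linear map `M → A` lifts to an `R`-linear map `M → R`. -/
theorem homTensorQuotMap_bijective
    (R : Type u) [CommRing R] [IsNoetherianRing R]
    (M : Type u) [AddCommGroup M] [Module R M] [Module.Finite R M]
    (y : R) (hy : y ∈ nonZeroDivisors R)
    (hext : Function.Injective
      (fun z : ((Ext R (ModuleCat.{u} R) 1).obj
          (Opposite.op (ModuleCat.of R M))).obj (ModuleCat.of R R) => y • z)) :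
    Function.Bijective (homTensorQuotMap R M y) ∧
      ∀ g : M →ₗ[R] (R ⧸ Ideal.span {y}), ∃ f : M →ₗ[R] R,
        (Algebra.linearMap R (R ⧸ Ideal.span {y})).comp f = g := by
  have lift := lift_of_ext R M y hy hext
  have hker : ∀ t, homTensorQuotMap R M y t = 0 → t = 0 := by
    intro t ht
    obtain ⟨f, rfl⟩ : ∃ f : M →ₗ[R] R, t = f ⊗ₜ (1 : R ⧸ Ideal.span {y}) := by
      clear ht
      induction t using TensorProduct.induction_on with
      | zero => exact ⟨0, by simp⟩
      | tmul f a =>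
        obtain ⟨r, rfl⟩ := Ideal.Quotient.mk_surjective a
        refine ⟨r • f, ?_⟩
        rw [TensorProduct.smul_tmul]
        congr 1
        rw [← Ideal.Quotient.algebraMap_eq, Algebra.algebraMap_eq_smul_one]
      | add u v hu hv =>
        obtain ⟨fu, rfl⟩ := hu
        obtain ⟨fv, rfl⟩ := hv
        exact ⟨fu + fv, by rw [TensorProduct.add_tmul]⟩
    have hev : ∀ m : M, Ideal.Quotient.mk (Ideal.span {y}) (f m) = 0 := by
      intro m
      have h1 := congrArg (fun ψ : ((R ⧸ Ideal.span {y}) ⊗[R] M) →ₗ[R ⧸ Ideal.span {y}]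
          (R ⧸ Ideal.span {y}) => ψ ((1 : R ⧸ Ideal.span {y}) ⊗ₜ[R] m)) ht
      simpa [homTensorQuotMap, Ideal.Quotient.algebraMap_eq] using h1
    obtain ⟨Hd, hHd⟩ := aux_div hy f (fun m => (Ideal.Quotient.eq_zero_iff_mem).mp (hev m))
    rw [hHd, TensorProduct.smul_tmul]
    have hy1 : (y • (1 : R ⧸ Ideal.span {y})) = 0 := by
      rw [← Algebra.algebraMap_eq_smul_one, Ideal.Quotient.algebraMap_eq,
        Ideal.Quotient.eq_zero_iff_mem]
      exact Ideal.mem_span_singleton_self y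
    rw [hy1, TensorProduct.tmul_zero]
  have hinj : Function.Injective (homTensorQuotMap R M y) := by
    intro a b hab
    have h0 : a - b = 0 := hker _ (by rw [map_sub, hab, sub_self])
    exact sub_eq_zero.mp h0
  have hsurj : Function.Surjective (homTensorQuotMap R M y) := by
    intro φ
    obtain ⟨f, hf⟩ := lift ((φ.restrictScalars R).comp
      ((TensorProduct.mk R (R ⧸ Ideal.span {y}) M) 1))
    refine ⟨f ⊗ₜ 1, ?_⟩
    apply LinearMap.ext
    intro t
    induction t using TensorProduct.induction_on with
    | zero => simp
    | tmul a m =>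
      have hfm : Ideal.Quotient.mk (Ideal.span {y}) (f m) = φ ((1 : R ⧸ Ideal.span {y}) ⊗ₜ[R] m) :=
        congrArg (fun ψ : M →ₗ[R] (R ⧸ Ideal.span {y}) => ψ m) hf
      have lhs : homTensorQuotMap R M y (f ⊗ₜ 1) (a ⊗ₜ[R] m) =
          a • Ideal.Quotient.mk (Ideal.span {y}) (f m) := by
        simp [homTensorQuotMap, Ideal.Quotient.algebraMap_eq]
      rw [lhs, hfm, ← map_smul φ]
      congr 1
      rw [TensorProduct.smul_tmul', smul_eq_mul, mul_one]
    | add u v hu hv => rw [map_add, map_add, hu, hv]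
  exact ⟨⟨hinj, hsurj⟩, lift⟩

end
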